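/- Let A and B be n×n real symmetric matrices with the same characteristic polynomial, common distinct eigenvalues λ₁,…,λ_m, and spectral projections E₁,…,E_m and F₁,…,F_m respectively (so A = Σᵢ λᵢEᵢ and B = Σᵢ λᵢFᵢ). Let b, c ∈ ℝⁿ. Suppose that (1) the bordered matrices [[A, b],[bᵀ, 0]] and [[B, c],[cᵀ, 0]] have the same characteristic polynomial, (2) the bordered matrices [[A, e],[eᵀ, 0]] and [[B, e],[eᵀ, 0]] have the same characteristic polynomial, and (3) the doubly bordered matrices [[A, b, e],[bᵀ, 0, 1],[eᵀ, 1, 0]] and [[B, c, e],[cᵀ, 0, 1],[eᵀ, 1, 0]] have the same characteristic polynomial. Then for every i ∈ {1,…,m}: bᵀEᵢb = cᵀFᵢc, eᵀEᵢe = eᵀFᵢe, and bᵀEᵢe = cᵀFᵢe. -/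

import Mathlib

open Matrix Polynomial


open Matrix

noncomputable section

/-- The bordered matrix `[[A, b], [bᵀ, 0]]`. -/
def border {V : Type} [Fintype V] [DecidableEq V] (A : Matrix V V ℝ) (b : V → ℝ) :
    Matrix (V ⊕ Unit) (V ⊕ Unit) ℝ :=
  Matrix.fromBlocks A (Matrix.of fun i _ => b i) (Matrix.of fun _ j => b j) 0

/-- `E 1, …, E m` are the spectral projections of the real symmetric matrix `A` associated
with its distinct eigenvalues `lam 1, …, lam m`: they are symmetric idempotents, mutually
orthogonal, summing to the identity, with `A = ∑ i, lam i • E i`, the `lam i` pairwise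
distinct and each `E i` nonzero (so each `lam i` really is an eigenvalue). -/
structure SpectralDecomp {n m : ℕ} (A : Matrix (Fin n) (Fin n) ℝ) (lam : Fin m → ℝ)
    (E : Fin m → Matrix (Fin n) (Fin n) ℝ) : Prop where
  symm : ∀ i, (E i).IsSymm
  idem : ∀ i, E i * E i = E i
  mul_eq_zero : ∀ i j, i ≠ j → E i * E j = 0
  sum_eq_one : ∑ i, E i = 1
  eq_sum : A = ∑ i, lam i • E i
  injective : Function.Injective lam
  ne_zero : ∀ i, E i ≠ 0


section Aux

lemma eval_charpoly' {k : Type} [Fintype k] [DecidableEq k] (M : Matrix k k ℝ) (x : ℝ) :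
    M.charpoly.eval x = ((x • (1:Matrix k k ℝ)) - M).det := by
  rw [Matrix.charpoly, ← Polynomial.coe_evalRingHom, RingHom.map_det]
  congr 1; ext i j
  simp [charmatrix_apply, Matrix.one_apply, Matrix.diagonal_apply]
  split_ifs <;> simp

variable {n m : ℕ} {A : Matrix (Fin n) (Fin n) ℝ} {lam : Fin m → ℝ}
  {E : Fin m → Matrix (Fin n) (Fin n) ℝ}

noncomputable def res (lam : Fin m → ℝ) (E : Fin m → Matrix (Fin n) (Fin n) ℝ) (x : ℝ) :
    Matrix (Fin n) (Fin n) ℝ := ∑ i, (x - lam i)⁻¹ • E i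

lemma res_right (hE : SpectralDecomp A lam E) {x : ℝ} (hx : ∀ i, x ≠ lam i) :
    (x • (1 : Matrix (Fin n) (Fin n) ℝ) - A) * res lam E x = 1 := by
  have hAR : A * res lam E x = ∑ i, (lam i * (x - lam i)⁻¹) • E i := by
    rw [hE.eq_sum, res, Finset.sum_mul_sum]
    rw [Finset.sum_comm]
    refine Finset.sum_congr rfl fun i _ => ?_
    rw [Finset.sum_eq_single i]
    · rw [smul_mul_smul_comm, hE.idem i]
    · intro j _ hj
      rw [smul_mul_smul_comm, hE.mul_eq_zero j i hj, smul_zero]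
    · simp
  rw [sub_mul, hAR, smul_mul_assoc, one_mul, res, Finset.smul_sum, ← Finset.sum_sub_distrib]
  have : ∀ i : Fin m, x • (x - lam i)⁻¹ • E i - (lam i * (x - lam i)⁻¹) • E i = E i := by
    intro i
    rw [smul_smul, ← sub_smul]
    have hxi : x - lam i ≠ 0 := sub_ne_zero.mpr (hx i)
    rw [show x * (x - lam i)⁻¹ - lam i * (x - lam i)⁻¹ = (x - lam i) * (x - lam i)⁻¹ by ring,
      mul_inv_cancel₀ hxi, one_smul]
  rw [Finset.sum_congr rfl fun i _ => this i, hE.sum_eq_one]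

lemma res_left (hE : SpectralDecomp A lam E) {x : ℝ} (hx : ∀ i, x ≠ lam i) :
    res lam E x * (x • (1 : Matrix (Fin n) (Fin n) ℝ) - A) = 1 := by
  have hAR : res lam E x * A = ∑ i, (lam i * (x - lam i)⁻¹) • E i := by
    rw [hE.eq_sum, res, Finset.sum_mul_sum]
    refine Finset.sum_congr rfl fun i _ => ?_
    rw [Finset.sum_eq_single i]
    · rw [smul_mul_smul_comm, hE.idem i, mul_comm]
    · intro j _ hj
      rw [smul_mul_smul_comm, hE.mul_eq_zero i j (Ne.symm hj), smul_zero]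
    · simp
  rw [mul_sub, hAR, mul_smul_comm, mul_one, res, Finset.smul_sum, ← Finset.sum_sub_distrib]
  have : ∀ i : Fin m, x • (x - lam i)⁻¹ • E i - (lam i * (x - lam i)⁻¹) • E i = E i := by
    intro i
    rw [smul_smul, ← sub_smul]
    have hxi : x - lam i ≠ 0 := sub_ne_zero.mpr (hx i)
    rw [show x * (x - lam i)⁻¹ - lam i * (x - lam i)⁻¹ = (x - lam i) * (x - lam i)⁻¹ by ring,
      mul_inv_cancel₀ hxi, one_smul]
  rw [Finset.sum_congr rfl fun i _ => this i, hE.sum_eq_one]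

lemma dot_res (u v : Fin n → ℝ) (x : ℝ) :
    u ⬝ᵥ (res lam E x *ᵥ v) = ∑ i, (x - lam i)⁻¹ * (u ⬝ᵥ (E i *ᵥ v)) := by
  have h1 : res lam E x *ᵥ v = ∑ i, (x - lam i)⁻¹ • (E i *ᵥ v) := by
    rw [res, show ((∑ i, (x - lam i)⁻¹ • E i) *ᵥ v)
        = Matrix.mulVec.addMonoidHomLeft v (∑ i, (x - lam i)⁻¹ • E i) from rfl, map_sum]
    refine Finset.sum_congr rfl fun i _ => ?_
    show ((x - lam i)⁻¹ • E i) *ᵥ v = _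
    rw [Matrix.smul_mulVec]
  rw [h1]
  rw [show u ⬝ᵥ (∑ i, (x - lam i)⁻¹ • (E i *ᵥ v)) = ∑ i, u ⬝ᵥ ((x - lam i)⁻¹ • (E i *ᵥ v)) from ?_]
  · exact Finset.sum_congr rfl fun i _ => by rw [dotProduct_smul, smul_eq_mul]
  · induction (Finset.univ : Finset (Fin m)) using Finset.cons_induction with
    | empty => simp
    | cons a s ha ih => rw [Finset.sum_cons, Finset.sum_cons, dotProduct_add, ih]

lemma sub_border_eq (A : Matrix (Fin n) (Fin n) ℝ) (b : Fin n → ℝ) (x : ℝ) :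
    x • (1 : Matrix (Fin n ⊕ Unit) (Fin n ⊕ Unit) ℝ)
      - Matrix.fromBlocks A (Matrix.of fun i (_ : Unit) => b i) (Matrix.of fun (_ : Unit) j => b j) 0
    = Matrix.fromBlocks (x • 1 - A) (-(Matrix.of fun i (_ : Unit) => b i))
        (-(Matrix.of fun (_ : Unit) j => b j)) (x • 1) := by
  rw [← fromBlocks_one, fromBlocks_smul, sub_eq_add_neg, Matrix.fromBlocks_neg, fromBlocks_add]
  congr 1 <;> simp [sub_eq_add_neg]

lemma det_sub_border (hE : SpectralDecomp A lam E) (b : Fin n → ℝ) {x : ℝ}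
    (hx : ∀ i, x ≠ lam i) :
    (x • (1 : Matrix (Fin n ⊕ Unit) (Fin n ⊕ Unit) ℝ)
      - Matrix.fromBlocks A (Matrix.of fun i (_ : Unit) => b i)
          (Matrix.of fun (_ : Unit) j => b j) 0).det
    = (x • (1 : Matrix (Fin n) (Fin n) ℝ) - A).det
        * (x - ∑ i, (x - lam i)⁻¹ * (b ⬝ᵥ (E i *ᵥ b))) := by
  rw [sub_border_eq]
  letI : Invertible (x • (1 : Matrix (Fin n) (Fin n) ℝ) - A) :=
    ⟨res lam E x, res_left hE hx, res_right hE hx⟩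
  rw [Matrix.det_fromBlocks₁₁]
  congr 1
  rw [Matrix.det_unique]
  have hinv : (⅟ (x • (1 : Matrix (Fin n) (Fin n) ℝ) - A)) = res lam E x := rfl
  rw [hinv, ← dot_res b b x]
  simp only [Matrix.mul_apply, Matrix.mulVec, dotProduct, Finset.mul_sum, Finset.sum_mul,
    mul_assoc, Matrix.sub_apply, Matrix.smul_apply, Matrix.one_apply_eq, smul_eq_mul, mul_one,
    Matrix.neg_apply, Matrix.of_apply, mul_neg, neg_mul, Finset.sum_neg_distrib, neg_neg,
    sub_neg_eq_add, sub_right_inj]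
  rw [Finset.sum_comm]

lemma det_two_unit (N : Matrix (Unit ⊕ Unit) (Unit ⊕ Unit) ℝ) :
    N.det = N (.inl ()) (.inl ()) * N (.inr ()) (.inr ())
      - N (.inl ()) (.inr ()) * N (.inr ()) (.inl ()) := by
  let e : Fin 2 ≃ Unit ⊕ Unit :=
    { toFun := ![Sum.inl (), Sum.inr ()]
      invFun := Sum.elim (fun _ => 0) (fun _ => 1)
      left_inv := by decide
      right_inv := by rintro (⟨⟩ | ⟨⟩) <;> rfl }
  rw [← Matrix.det_submatrix_equiv_self e, Matrix.det_fin_two]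
  rfl

lemma border2_reindex (A : Matrix (Fin n) (Fin n) ℝ) (b : Fin n → ℝ) :
    (Matrix.fromBlocks
        (Matrix.fromBlocks A (Matrix.of fun i (_ : Unit) => b i)
          (Matrix.of fun (_ : Unit) j => b j) 0)
        (Matrix.of fun _ (_ : Unit) => (1 : ℝ)) (Matrix.of fun (_ : Unit) _ => (1 : ℝ))
        0).submatrix (Equiv.sumAssoc (Fin n) Unit Unit).symm
          (Equiv.sumAssoc (Fin n) Unit Unit).symm
    = Matrix.fromBlocks A
        (Matrix.of fun (i : Fin n) (j : Unit ⊕ Unit) =>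
          Sum.elim (fun _ => b i) (fun _ => (1 : ℝ)) j)
        (Matrix.of fun (j : Unit ⊕ Unit) (i : Fin n) =>
          Sum.elim (fun _ => b i) (fun _ => (1 : ℝ)) j)
        (Matrix.fromBlocks 0 1 1 0) := by
  ext i j
  rcases i with i | (⟨⟩ | ⟨⟩) <;> rcases j with j | (⟨⟩ | ⟨⟩) <;>
    simp [Matrix.submatrix_apply, Equiv.sumAssoc, Matrix.fromBlocks, Matrix.one_apply]

lemma dot_symm {M : Matrix (Fin n) (Fin n) ℝ} (hM : M.IsSymm) (u v : Fin n → ℝ) :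
    u ⬝ᵥ (M *ᵥ v) = v ⬝ᵥ (M *ᵥ u) := by
  rw [Matrix.dotProduct_mulVec, ← Matrix.mulVec_transpose, hM.eq, dotProduct_comm]

lemma det_sub_border2 (hE : SpectralDecomp A lam E) (b : Fin n → ℝ) {x : ℝ}
    (hx : ∀ i, x ≠ lam i) :
    (x • (1 : Matrix ((Fin n ⊕ Unit) ⊕ Unit) ((Fin n ⊕ Unit) ⊕ Unit) ℝ)
      - Matrix.fromBlocks
          (Matrix.fromBlocks A (Matrix.of fun i (_ : Unit) => b i)
            (Matrix.of fun (_ : Unit) j => b j) 0)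
          (Matrix.of fun _ (_ : Unit) => (1 : ℝ)) (Matrix.of fun (_ : Unit) _ => (1 : ℝ)) 0).det
    = (x • (1 : Matrix (Fin n) (Fin n) ℝ) - A).det
        * ((x - ∑ i, (x - lam i)⁻¹ * (b ⬝ᵥ (E i *ᵥ b)))
            * (x - ∑ i, (x - lam i)⁻¹ * ((fun _ => (1:ℝ)) ⬝ᵥ (E i *ᵥ fun _ => (1:ℝ))))
          - (1 + ∑ i, (x - lam i)⁻¹ * (b ⬝ᵥ (E i *ᵥ fun _ => (1:ℝ))))^2) := by
  set σ := (Equiv.sumAssoc (Fin n) Unit Unit).symm with hσ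
  set C := Matrix.of fun (i : Fin n) (j : Unit ⊕ Unit) =>
    Sum.elim (fun _ => b i) (fun _ => (1 : ℝ)) j with hC
  set Ct := Matrix.of fun (j : Unit ⊕ Unit) (i : Fin n) =>
    Sum.elim (fun _ => b i) (fun _ => (1 : ℝ)) j with hCt
  set D := (Matrix.fromBlocks 0 1 1 0 : Matrix (Unit ⊕ Unit) (Unit ⊕ Unit) ℝ) with hD
  set BB := Matrix.fromBlocks
      (Matrix.fromBlocks A (Matrix.of fun i (_ : Unit) => b i)
        (Matrix.of fun (_ : Unit) j => b j) 0)
      (Matrix.of fun _ (_ : Unit) => (1 : ℝ)) (Matrix.of fun (_ : Unit) _ => (1 : ℝ)) 0 with hBB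
  have hsub : (x • (1 : Matrix ((Fin n ⊕ Unit) ⊕ Unit) ((Fin n ⊕ Unit) ⊕ Unit) ℝ)
      - BB).submatrix σ σ
      = x • (1 : Matrix (Fin n ⊕ (Unit ⊕ Unit)) (Fin n ⊕ (Unit ⊕ Unit)) ℝ)
        - Matrix.fromBlocks A C Ct D := by
    have h1 : (x • (1 : Matrix ((Fin n ⊕ Unit) ⊕ Unit) ((Fin n ⊕ Unit) ⊕ Unit) ℝ)
        - BB).submatrix σ σ
        = x • ((1 : Matrix ((Fin n ⊕ Unit) ⊕ Unit) ((Fin n ⊕ Unit) ⊕ Unit) ℝ).submatrix σ σ)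
          - BB.submatrix σ σ := by
      ext i j; simp [Matrix.submatrix_apply, Matrix.one_apply, σ.injective.eq_iff]
    rw [h1, Matrix.submatrix_one_equiv, hBB, hσ, border2_reindex]
  rw [← Matrix.det_submatrix_equiv_self σ, hsub]
  have hblock : x • (1 : Matrix (Fin n ⊕ (Unit ⊕ Unit)) (Fin n ⊕ (Unit ⊕ Unit)) ℝ)
      - Matrix.fromBlocks A C Ct D
      = Matrix.fromBlocks (x • 1 - A) (-C) (-Ct) (x • 1 - D) := by
    rw [← fromBlocks_one, fromBlocks_smul, sub_eq_add_neg, Matrix.fromBlocks_neg, fromBlocks_add]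
    congr 1 <;> simp [sub_eq_add_neg]
  rw [hblock]
  letI : Invertible (x • (1 : Matrix (Fin n) (Fin n) ℝ) - A) :=
    ⟨res lam E x, res_left hE hx, res_right hE hx⟩
  rw [Matrix.det_fromBlocks₁₁]
  congr 1
  have hinv : (⅟ (x • (1 : Matrix (Fin n) (Fin n) ℝ) - A)) = res lam E x := rfl
  rw [hinv, det_two_unit]
  have key : ∀ (p q : Unit ⊕ Unit),
      (Ct * res lam E x * C) p q
      = (Sum.elim (fun _ => b) (fun _ => fun _ => (1:ℝ)) p) ⬝ᵥ
          (res lam E x *ᵥ (Sum.elim (fun _ => b) (fun _ => fun _ => (1:ℝ)) q)) := by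
    intro p q
    rcases p with ⟨⟩ | ⟨⟩ <;> rcases q with ⟨⟩ | ⟨⟩ <;>
      · simp only [hC, hCt, Matrix.mul_apply, Matrix.of_apply, Sum.elim_inl, Sum.elim_inr,
          dotProduct, Matrix.mulVec, Finset.sum_mul, Finset.mul_sum, mul_assoc]
        rw [Finset.sum_comm]
  have hsym : ∀ i, (fun _ => (1:ℝ)) ⬝ᵥ (E i *ᵥ b) = b ⬝ᵥ (E i *ᵥ fun _ => (1:ℝ)) :=
    fun i => dot_symm (hE.symm i) _ _
  simp only [Matrix.neg_mul, Matrix.mul_neg, neg_neg, Matrix.sub_apply, Matrix.smul_apply,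
    smul_eq_mul, key, Sum.elim_inl, Sum.elim_inr, dot_res, hsym, hD,
    Matrix.fromBlocks_apply₁₁, Matrix.fromBlocks_apply₁₂, Matrix.fromBlocks_apply₂₁,
    Matrix.fromBlocks_apply₂₂, Matrix.zero_apply, Matrix.one_apply_eq, Matrix.one_apply,
    Sum.inl.injEq, Sum.inr.injEq, if_true, reduceCtorEq, if_false]
  ring

lemma indep_lemma (lam : Fin m → ℝ) (hinj : Function.Injective lam) (c : Fin m → ℝ)
    (S : Set ℝ) (hS : S.Infinite) (hgood : ∀ x ∈ S, ∀ i, x ≠ lam i)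
    (h : ∀ x ∈ S, ∑ i, (x - lam i)⁻¹ * c i = 0) : ∀ i, c i = 0 := by
  set Q : Polynomial ℝ :=
    ∑ i, Polynomial.C (c i) * ∏ j ∈ Finset.univ.erase i, (Polynomial.X - Polynomial.C (lam j))
    with hQ
  have hQ0 : Q = 0 := by
    refine Polynomial.eq_zero_of_infinite_isRoot Q (hS.mono ?_)
    intro x hx
    have hxl : ∀ i, x - lam i ≠ 0 := fun i => sub_ne_zero.mpr (hgood x hx i)
    have heval : Q.eval x = (∏ j, (x - lam j)) * ∑ i, (x - lam i)⁻¹ * c i := by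
      rw [hQ, Polynomial.eval_finset_sum, Finset.mul_sum]
      refine Finset.sum_congr rfl fun i _ => ?_
      rw [Polynomial.eval_mul, Polynomial.eval_C, Polynomial.eval_prod]
      simp only [Polynomial.eval_sub, Polynomial.eval_X, Polynomial.eval_C]
      rw [← Finset.mul_prod_erase Finset.univ _ (Finset.mem_univ i)]
      field_simp [hxl i]
    simp only [Set.mem_setOf_eq, Polynomial.IsRoot.def, heval, h x hx, mul_zero]
  intro i
  have := congr_arg (Polynomial.eval (lam i)) hQ0
  rw [hQ, Polynomial.eval_finset_sum, Polynomial.eval_zero] at this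
  rw [Finset.sum_eq_single i] at this
  · rw [Polynomial.eval_mul, Polynomial.eval_C, Polynomial.eval_prod] at this
    simp only [Polynomial.eval_sub, Polynomial.eval_X, Polynomial.eval_C] at this
    have hprod : ∏ j ∈ Finset.univ.erase i, (lam i - lam j) ≠ 0 := by
      refine Finset.prod_ne_zero_iff.mpr fun j hj => sub_ne_zero.mpr ?_
      exact fun hh => (Finset.mem_erase.mp hj).1 (hinj hh.symm)
    exact (mul_eq_zero.mp this).resolve_right hprod
  · intro j _ hj
    rw [Polynomial.eval_mul, Polynomial.eval_prod]
    refine mul_eq_zero_of_right _ (Finset.prod_eq_zero (Finset.mem_erase.mpr ⟨Ne.symm hj,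
      Finset.mem_univ i⟩) ?_)
    simp
  · simp

end Aux

section Aux2
variable {n m : ℕ} {A : Matrix (Fin n) (Fin n) ℝ} {lam : Fin m → ℝ}
  {E : Fin m → Matrix (Fin n) (Fin n) ℝ}

lemma det_sub_border' (hE : SpectralDecomp A lam E) (b : Fin n → ℝ) {x : ℝ}
    (hx : ∀ i, x ≠ lam i) :
    (x • (1 : Matrix (Fin n ⊕ Unit) (Fin n ⊕ Unit) ℝ) - border A b).det
    = (x • (1 : Matrix (Fin n) (Fin n) ℝ) - A).det
        * (x - ∑ i, (x - lam i)⁻¹ * (b ⬝ᵥ (E i *ᵥ b))) :=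
  det_sub_border hE b hx

lemma det_sub_border2' (hE : SpectralDecomp A lam E) (b : Fin n → ℝ) {x : ℝ}
    (hx : ∀ i, x ≠ lam i) :
    (x • (1 : Matrix ((Fin n ⊕ Unit) ⊕ Unit) ((Fin n ⊕ Unit) ⊕ Unit) ℝ)
      - border (border A b) fun _ => (1 : ℝ)).det
    = (x • (1 : Matrix (Fin n) (Fin n) ℝ) - A).det
        * ((x - ∑ i, (x - lam i)⁻¹ * (b ⬝ᵥ (E i *ᵥ b)))
            * (x - ∑ i, (x - lam i)⁻¹ * ((fun _ => (1:ℝ)) ⬝ᵥ (E i *ᵥ fun _ => (1:ℝ))))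
          - (1 + ∑ i, (x - lam i)⁻¹ * (b ⬝ᵥ (E i *ᵥ fun _ => (1:ℝ))))^2) :=
  det_sub_border2 hE b hx

end Aux2

/-- the Claim in Proposition 5. -/
theorem claim_spectral_inner_products
    {n m : ℕ} (A B : Matrix (Fin n) (Fin n) ℝ) (lam : Fin m → ℝ)
    (E F : Fin m → Matrix (Fin n) (Fin n) ℝ) (b c : Fin n → ℝ)
    (hA : A.IsSymm) (hB : B.IsSymm)
    (hE : SpectralDecomp A lam E) (hF : SpectralDecomp B lam F)
    (hAB : A.charpoly = B.charpoly)
    (h1 : (border A b).charpoly = (border B c).charpoly)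
    (h2 : (border A fun _ => (1 : ℝ)).charpoly = (border B fun _ => (1 : ℝ)).charpoly)
    (h3 : (border (border A b) fun _ => (1 : ℝ)).charpoly
        = (border (border B c) fun _ => (1 : ℝ)).charpoly) :
    ∀ i, b ⬝ᵥ (E i *ᵥ b) = c ⬝ᵥ (F i *ᵥ c)
      ∧ (fun _ => (1 : ℝ)) ⬝ᵥ (E i *ᵥ fun _ => (1 : ℝ))
          = (fun _ => (1 : ℝ)) ⬝ᵥ (F i *ᵥ fun _ => (1 : ℝ))
      ∧ b ⬝ᵥ (E i *ᵥ fun _ => (1 : ℝ)) = c ⬝ᵥ (F i *ᵥ fun _ => (1 : ℝ)) := by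
  classical
  set p := A.charpoly with hp
  have hp0 : p ≠ 0 := A.charpoly_monic.ne_zero
  set Bad : Set ℝ := {x | p.eval x = 0} ∪ Set.range lam with hBad
  have hBadFin : Bad.Finite := (Polynomial.finite_setOf_isRoot hp0).union (Set.finite_range lam)
  -- basic facts for good x
  have hdetA : ∀ x : ℝ, (x • (1 : Matrix (Fin n) (Fin n) ℝ) - A).det = p.eval x :=
    fun x => (eval_charpoly' A x).symm
  have hdetB : ∀ x : ℝ, (x • (1 : Matrix (Fin n) (Fin n) ℝ) - B).det = p.eval x :=
    fun x => by rw [← eval_charpoly' B x, ← hAB]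
  have hGne : ∀ x ∉ Bad, p.eval x ≠ 0 := fun x hx => fun h0 => hx (Or.inl h0)
  have hGlam : ∀ x ∉ Bad, ∀ i, x ≠ lam i := fun x hx i heq => hx (Or.inr ⟨i, heq.symm⟩)
  -- step 1: b E b = c F c
  have step1 : ∀ i, b ⬝ᵥ (E i *ᵥ b) = c ⬝ᵥ (F i *ᵥ c) := by
    intro i
    have key : ∀ x ∈ Badᶜ,
        ∑ j, (x - lam j)⁻¹ * (b ⬝ᵥ (E j *ᵥ b) - c ⬝ᵥ (F j *ᵥ c)) = 0 := by
      intro x hx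
      have hxl := hGlam x hx
      have hev := congr_arg (Polynomial.eval x) h1
      rw [eval_charpoly', eval_charpoly', det_sub_border' hE b hxl,
        det_sub_border' hF c hxl, hdetA, hdetB] at hev
      have := mul_left_cancel₀ (hGne x hx) hev
      have hsum : ∑ j, (x - lam j)⁻¹ * (b ⬝ᵥ (E j *ᵥ b))
          = ∑ j, (x - lam j)⁻¹ * (c ⬝ᵥ (F j *ᵥ c)) := by linarith
      simp only [mul_sub, Finset.sum_sub_distrib, hsum, sub_self]
    have := indep_lemma lam hE.injective _ Badᶜ (hBadFin.infinite_compl)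
      (fun x hx => hGlam x hx) key i
    linarith [this]
  have step2 : ∀ i, (fun _ => (1:ℝ)) ⬝ᵥ (E i *ᵥ fun _ => (1:ℝ))
      = (fun _ => (1:ℝ)) ⬝ᵥ (F i *ᵥ fun _ => (1:ℝ)) := by
    intro i
    have key : ∀ x ∈ Badᶜ,
        ∑ j, (x - lam j)⁻¹ * ((fun _ => (1:ℝ)) ⬝ᵥ (E j *ᵥ fun _ => (1:ℝ))
          - (fun _ => (1:ℝ)) ⬝ᵥ (F j *ᵥ fun _ => (1:ℝ))) = 0 := by
      intro x hx
      have hxl := hGlam x hx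
      have hev := congr_arg (Polynomial.eval x) h2
      rw [eval_charpoly', eval_charpoly', det_sub_border' hE _ hxl,
        det_sub_border' hF _ hxl, hdetA, hdetB] at hev
      have := mul_left_cancel₀ (hGne x hx) hev
      have hsum : ∑ j, (x - lam j)⁻¹ * ((fun _ => (1:ℝ)) ⬝ᵥ (E j *ᵥ fun _ => (1:ℝ)))
          = ∑ j, (x - lam j)⁻¹ * ((fun _ => (1:ℝ)) ⬝ᵥ (F j *ᵥ fun _ => (1:ℝ))) := by linarith
      simp only [mul_sub, Finset.sum_sub_distrib, hsum, sub_self]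
    have := indep_lemma lam hE.injective _ Badᶜ (hBadFin.infinite_compl)
      (fun x hx => hGlam x hx) key i
    linarith [this]
  -- step 3
  have step3 : ∀ i, b ⬝ᵥ (E i *ᵥ fun _ => (1:ℝ)) = c ⬝ᵥ (F i *ᵥ fun _ => (1:ℝ)) := by
    set g : Fin m → ℝ := fun i => b ⬝ᵥ (E i *ᵥ fun _ => (1:ℝ)) with hg
    set g' : Fin m → ℝ := fun i => c ⬝ᵥ (F i *ᵥ fun _ => (1:ℝ)) with hg'
    set G : ℝ := ∑ i, (|g i| + |g' i|) with hG
    have hG0 : 0 ≤ G := Finset.sum_nonneg fun i _ => by positivity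
    set Λ : ℝ := ∑ i, |lam i| with hΛ
    set S : Set ℝ := Set.Ioi (Λ + G + 1) \ Bad with hS
    have hSinf : S.Infinite := (Set.Ioi_infinite _).diff hBadFin
    -- bound on gamma sums
    have hbound : ∀ x ∈ S, ∀ (h : Fin m → ℝ), (∑ i, |h i|) ≤ G →
        |∑ i, (x - lam i)⁻¹ * h i| < 1 := by
      intro x hxS h hh
      have hxgt : Λ + G + 1 < x := hxS.1
      have hxi : ∀ i, G + 1 ≤ x - lam i := by
        intro i
        have h1' : lam i ≤ Λ := by
          calc lam i ≤ |lam i| := le_abs_self _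
          _ ≤ Λ := Finset.single_le_sum (f := fun j => |lam j|)
              (fun j _ => abs_nonneg _) (Finset.mem_univ i)
        linarith
      have hGpos : (0:ℝ) < G + 1 := by linarith
      calc |∑ i, (x - lam i)⁻¹ * h i| ≤ ∑ i, |(x - lam i)⁻¹ * h i| :=
            Finset.abs_sum_le_sum_abs _ _
        _ ≤ ∑ i, (G + 1)⁻¹ * |h i| := by
            refine Finset.sum_le_sum fun i _ => ?_
            rw [abs_mul, abs_of_pos (inv_pos.mpr (by linarith [hxi i]))]
            exact mul_le_mul_of_nonneg_right
              (inv_anti₀ hGpos (hxi i)) (abs_nonneg _)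
        _ = (G + 1)⁻¹ * ∑ i, |h i| := by rw [Finset.mul_sum]
        _ ≤ (G + 1)⁻¹ * G := by
            exact mul_le_mul_of_nonneg_left hh (le_of_lt (inv_pos.mpr hGpos))
        _ < 1 := by
            rw [inv_mul_lt_iff₀ hGpos]; linarith
    have hgB : (∑ i, |g i|) ≤ G :=
      Finset.sum_le_sum fun i _ => le_add_of_nonneg_right (abs_nonneg _)
    have hg'B : (∑ i, |g' i|) ≤ G :=
      Finset.sum_le_sum fun i _ => le_add_of_nonneg_left (abs_nonneg _)
    intro i
    have key : ∀ x ∈ S, ∑ j, (x - lam j)⁻¹ * (g j - g' j) = 0 := by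
      intro x hxS
      have hxB : x ∉ Bad := hxS.2
      have hxl := hGlam x hxB
      have hev := congr_arg (Polynomial.eval x) h3
      rw [eval_charpoly', eval_charpoly', det_sub_border2' hE b hxl,
        det_sub_border2' hF c hxl, hdetA, hdetB] at hev
      have hcan := mul_left_cancel₀ (hGne x hxB) hev
      have hββ : ∑ j, (x - lam j)⁻¹ * (b ⬝ᵥ (E j *ᵥ b))
          = ∑ j, (x - lam j)⁻¹ * (c ⬝ᵥ (F j *ᵥ c)) :=
        Finset.sum_congr rfl fun j _ => by rw [step1 j]
      have hεε : ∑ j, (x - lam j)⁻¹ * ((fun _ => (1:ℝ)) ⬝ᵥ (E j *ᵥ fun _ => (1:ℝ)))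
          = ∑ j, (x - lam j)⁻¹ * ((fun _ => (1:ℝ)) ⬝ᵥ (F j *ᵥ fun _ => (1:ℝ))) :=
        Finset.sum_congr rfl fun j _ => by rw [step2 j]
      rw [hββ, hεε] at hcan
      set a1 : ℝ := ∑ j, (x - lam j)⁻¹ * g j with ha1
      set a2 : ℝ := ∑ j, (x - lam j)⁻¹ * g' j with ha2
      have hsq : (1 + a1)^2 = (1 + a2)^2 := by linarith
      have h1' : |a1| < 1 := hbound x hxS g hgB
      have h2' : |a2| < 1 := hbound x hxS g' hg'B
      have hfac : (a1 - a2) * (2 + a1 + a2) = 0 := by linear_combination hsq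
      have ha12 : a1 = a2 := by
        rcases mul_eq_zero.mp hfac with h | h
        · linarith
        · have := abs_lt.mp h1'
          have := abs_lt.mp h2'
          linarith
      simp only [mul_sub, Finset.sum_sub_distrib, ← ha1, ← ha2, ha12, sub_self]
    have := indep_lemma lam hE.injective _ S hSinf
      (fun x hx => hGlam x hx.2) key i
    have : g i - g' i = 0 := this
    simpa [hg, hg'] using sub_eq_zero.mp this
  exact fun i => ⟨step1 i, step2 i, step3 i⟩
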